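/- Let A be a Minkowski Dedekind domain and n a positive integer. An ideal I of A is n-congruing if and only if for every maximal ideal 𝔭 of A, the extension of I to the completion Â_𝔭 is an n-congruing ideal of Â_𝔭 (Hasse principle for n-congruing ideals). -/

import Mathlib

open AdicCompletion

section CongruingAux

variable {A : Type} [CommRing A]

private lemma smul_top_eq' (J : Ideal A) : (J • ⊤ : Submodule A A) = J := by ext x; simp

private lemma algebraMap_val' (𝔭 : Ideal A) (r : A) (k : ℕ) :
    (algebraMap A (AdicCompletion 𝔭 A) r).val k
      = Submodule.Quotient.mk (p := (𝔭 ^ k • ⊤ : Submodule A A)) r := rfl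

private lemma val_pow' (𝔭 : Ideal A) (k n : ℕ) (x : AdicCompletion 𝔭 A) :
    (x ^ k).val n = (x.val n) ^ k := by
  induction k with
  | zero => simp [pow_zero, AdicCompletion.val_one]
  | succ k ih => rw [pow_succ, pow_succ, AdicCompletion.val_mul, ih]

private lemma one_sub_pow_mem' {J : Ideal A} {u : A} (h : 1 - u ∈ J) (N : ℕ) :
    1 - u ^ N ∈ J := by
  have key : 1 - u ^ N = (∑ i ∈ Finset.range N, u ^ i) * (1 - u) := by
    linear_combination geom_sum_mul u N
  rw [key]
  exact Ideal.mul_mem_left _ _ h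

private lemma isUnit_one_sub_algebraMap' (𝔭 : Ideal A) {m : A} (hm : m ∈ 𝔭) :
    IsUnit (1 - algebraMap A (AdicCompletion 𝔭 A) m) := by
  have hc : ∀ l : ℕ, (∑ i ∈ Finset.range l, m ^ i) ≡ (∑ i ∈ Finset.range (l + 1), m ^ i)
      [SMOD (𝔭 ^ l • ⊤ : Submodule A A)] := by
    intro l
    rw [SModEq.sub_mem, smul_top_eq']
    have h0 : (∑ i ∈ Finset.range l, m ^ i) - (∑ i ∈ Finset.range (l + 1), m ^ i) = -(m ^ l) := by
      rw [Finset.sum_range_succ]; ring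
    rw [h0]
    exact neg_mem (Ideal.pow_mem_pow hm l)
  set s : AdicCauchySequence 𝔭 A :=
    AdicCauchySequence.mk 𝔭 A (fun l => ∑ i ∈ Finset.range l, m ^ i) hc with hs
  refine IsUnit.of_mul_eq_one (AdicCompletion.mk 𝔭 A s) ?_
  ext k
  rw [AdicCompletion.val_mul, AdicCompletion.val_one, AdicCompletion.val_sub_apply,
    AdicCompletion.val_one, algebraMap_val', AdicCompletion.mk_apply_coe]
  have hsk : s k = ∑ i ∈ Finset.range k, m ^ i := rfl
  rw [Submodule.mkQ_apply, hsk]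
  have h1 : ((1 : A ⧸ (𝔭 ^ k • ⊤ : Submodule A A)) -
        Submodule.Quotient.mk (p := (𝔭 ^ k • ⊤ : Submodule A A)) m) *
        Submodule.Quotient.mk (p := (𝔭 ^ k • ⊤ : Submodule A A)) (∑ i ∈ Finset.range k, m ^ i)
      = Submodule.Quotient.mk (p := (𝔭 ^ k • ⊤ : Submodule A A))
          ((1 - m) * ∑ i ∈ Finset.range k, m ^ i) := rfl
  rw [h1]
  have h2 : ((1 - m) * ∑ i ∈ Finset.range k, m ^ i) = 1 - m ^ k := by
    linear_combination -geom_sum_mul m k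
  rw [h2]
  rw [show ((1 : A ⧸ (𝔭 ^ k • ⊤ : Submodule A A))) =
    Submodule.Quotient.mk (p := (𝔭 ^ k • ⊤ : Submodule A A)) 1 from rfl]
  rw [Submodule.Quotient.eq, smul_top_eq']
  have h3 : (1 - m ^ k) - 1 = -(m ^ k) := by ring
  rw [h3]
  exact neg_mem (Ideal.pow_mem_pow hm k)

private lemma map_eq_top_of_sup' (𝔭 : Ideal A) {J : Ideal A} (hsup : 𝔭 ⊔ J = ⊤) :
    Ideal.map (algebraMap A (AdicCompletion 𝔭 A)) J = ⊤ := by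
  have h1 : (1 : A) ∈ 𝔭 ⊔ J := by rw [hsup]; exact Submodule.mem_top
  obtain ⟨m, hm, j, hj, hmj⟩ := Submodule.mem_sup.mp h1
  have hj' : algebraMap A (AdicCompletion 𝔭 A) j = 1 - algebraMap A (AdicCompletion 𝔭 A) m := by
    rw [eq_sub_iff_add_eq, ← map_add, show j + m = (1 : A) from by rw [add_comm]; exact hmj, map_one]
  exact Ideal.eq_top_of_isUnit_mem _ (Ideal.mem_map_of_mem _ hj)
    (hj' ▸ isUnit_one_sub_algebraMap' 𝔭 hm)

private lemma val_eq_zero_of_mem_map' (𝔭 : Ideal A) (e : ℕ) {z : AdicCompletion 𝔭 A}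
    (hz : z ∈ Ideal.map (algebraMap A (AdicCompletion 𝔭 A)) (𝔭 ^ e)) : z.val e = 0 := by
  rw [Ideal.map, Ideal.span] at hz
  refine Submodule.span_induction ?_ ?_ ?_ ?_ hz
  · rintro x ⟨j, hj, rfl⟩
    rw [algebraMap_val', Submodule.Quotient.mk_eq_zero, smul_top_eq']
    exact hj
  · rfl
  · intro x y _ _ hx hy
    rw [AdicCompletion.val_add_apply, hx, hy, add_zero]
  · intro c x _ hx
    have h0 : (c • x).val e = c.val e * x.val e := rfl
    rw [h0, hx, mul_zero]

private lemma mem_pow_of_algebraMap_mem_map' (𝔭 : Ideal A) (e : ℕ) {z : A}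
    (hz : algebraMap A (AdicCompletion 𝔭 A) z
      ∈ Ideal.map (algebraMap A (AdicCompletion 𝔭 A)) (𝔭 ^ e)) : z ∈ 𝔭 ^ e := by
  have h := val_eq_zero_of_mem_map' 𝔭 e hz
  rw [algebraMap_val', Submodule.Quotient.mk_eq_zero, smul_top_eq'] at h
  exact h

private lemma key_mem' (𝔭 : Ideal A) (h𝔭 : 𝔭.IsMaximal) {e N n : ℕ} {a : A}
    (h : a ^ N * (a ^ n - 1) ∈ 𝔭 ^ e) : a ^ e * (a ^ n - 1) ∈ 𝔭 ^ e := by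
  by_cases ha : a ∈ 𝔭
  · exact Ideal.mul_mem_right _ _ (Ideal.pow_mem_pow ha e)
  · obtain ⟨c, m, hm, hcm⟩ := h𝔭.exists_inv ha
    set u := c * a with hu
    have hxu : 1 - u ∈ 𝔭 := by
      have huu : 1 - u = m := by rw [hu]; linear_combination -hcm
      rw [huu]; exact hm
    set t := (∑ i ∈ Finset.range e, (1 - u) ^ i) * u with ht
    have h1t : 1 - t ∈ 𝔭 ^ e := by
      have htt : 1 - t = (1 - u) ^ e := by
        rw [ht]; linear_combination geom_sum_mul (1 - u) e
      rw [htt]; exact Ideal.pow_mem_pow hxu e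
    have h2t : 1 - t ^ N ∈ 𝔭 ^ e := one_sub_pow_mem' h1t N
    have h3 : t ^ N * (a ^ n - 1) ∈ 𝔭 ^ e := by
      have hexp : t ^ N * (a ^ n - 1)
          = ((∑ i ∈ Finset.range e, (1 - u) ^ i) ^ N * c ^ N) * (a ^ N * (a ^ n - 1)) := by
        rw [ht, hu]; ring
      rw [hexp]; exact Ideal.mul_mem_left _ _ h
    have h4 : a ^ n - 1 ∈ 𝔭 ^ e := by
      have hexp : a ^ n - 1 = t ^ N * (a ^ n - 1) + (1 - t ^ N) * (a ^ n - 1) := by ring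
      rw [hexp]; exact add_mem h3 (Ideal.mul_mem_right _ _ h2t)
    exact Ideal.mul_mem_left _ _ h4

variable [IsNoetherianRing A]

private lemma mem_map_of_val_eq_zero' (𝔭 : Ideal A) (k : ℕ)
    (b : AdicCompletion 𝔭 A) (hb : b.val k = 0) :
    b ∈ Ideal.map (algebraMap A (AdicCompletion 𝔭 A)) (𝔭 ^ k) := by
  classical
  set S : Submodule A A := (𝔭 ^ k : Ideal A) with hS
  haveI : Module.Finite A S := Module.Finite.iff_fg.mpr (IsNoetherian.noetherian S)
  have hexact := AdicCompletion.map_exact (I := 𝔭) (Submodule.injective_subtype S)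
    (LinearMap.exact_subtype_mkQ S) (Submodule.mkQ_surjective S)
  have hzero : AdicCompletion.map 𝔭 S.mkQ b = 0 := by
    ext m
    obtain ⟨a, ha⟩ := Submodule.Quotient.mk_surjective _ (b.val (max k m))
    have hbm : b.val m = Submodule.Quotient.mk (p := (𝔭 ^ m • ⊤ : Submodule A A)) a := by
      rw [← AdicCompletion.transitionMap_comp_eval_apply 𝔭 A (le_max_right k m) b, ← ha]
      rfl
    have hbk : b.val k = Submodule.Quotient.mk (p := (𝔭 ^ k • ⊤ : Submodule A A)) a := by
      rw [← AdicCompletion.transitionMap_comp_eval_apply 𝔭 A (le_max_left k m) b, ← ha]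
      rfl
    have haS : a ∈ S := by
      rw [hbk, Submodule.Quotient.mk_eq_zero] at hb
      rwa [smul_top_eq'] at hb
    rw [AdicCompletion.map_val_apply, AdicCompletion.val_zero_apply, hbm,
      LinearMap.reduceModIdeal_apply, Submodule.mkQ_apply,
      (Submodule.Quotient.mk_eq_zero _).mpr haS]
    simp
  obtain ⟨x, hx⟩ := (hexact b).mp hzero
  obtain ⟨y, hy⟩ := AdicCompletion.ofTensorProduct_surjective_of_finite 𝔭 S x
  rw [← hx, ← hy]
  clear hx hy hzero hb
  induction y using TensorProduct.induction_on with
  | zero => rw [_root_.map_zero, _root_.map_zero]; exact Ideal.zero_mem _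
  | tmul c s =>
      rw [AdicCompletion.ofTensorProduct_tmul, map_smul]
      have hof : AdicCompletion.map 𝔭 S.subtype (AdicCompletion.of 𝔭 S s)
          = algebraMap A (AdicCompletion 𝔭 A) (s : A) := by
        ext n
        rfl
      rw [hof]
      have hsm : c • algebraMap A (AdicCompletion 𝔭 A) (s : A)
          = c * algebraMap A (AdicCompletion 𝔭 A) (s : A) := rfl
      rw [hsm]
      exact Ideal.mul_mem_left _ _ (Ideal.mem_map_of_mem _ s.2)
  | add u v hu hv => rw [_root_.map_add, _root_.map_add]; exact add_mem hu hv

private lemma forward_mem' (𝔭 : Ideal A) (h𝔭 : 𝔭.IsMaximal) {I : Ideal A} {e : ℕ} {J : Ideal A}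
    (hIJ : I = 𝔭 ^ e * J) (hJ : Ideal.map (algebraMap A (AdicCompletion 𝔭 A)) J = ⊤)
    {n : ℕ} (h : ∀ a : A, ∃ N : ℕ, a ^ N * (a ^ n - 1) ∈ I) (b : AdicCompletion 𝔭 A) :
    b ^ e * (b ^ n - 1) ∈ Ideal.map (algebraMap A (AdicCompletion 𝔭 A)) I := by
  have hmap : Ideal.map (algebraMap A (AdicCompletion 𝔭 A)) I
      = Ideal.map (algebraMap A (AdicCompletion 𝔭 A)) (𝔭 ^ e) := by
    rw [hIJ, Ideal.map_mul, hJ, Ideal.mul_top]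
  have hIle : I ≤ 𝔭 ^ e := by rw [hIJ]; exact Ideal.mul_le_left
  rw [hmap]
  obtain ⟨a, ha⟩ := Submodule.Quotient.mk_surjective _ (b.val e)
  obtain ⟨N, hN⟩ := h a
  have h1 : a ^ e * (a ^ n - 1) ∈ 𝔭 ^ e := key_mem' 𝔭 h𝔭 (hIle hN)
  have h2 : (b ^ e * (b ^ n - 1)
      - algebraMap A (AdicCompletion 𝔭 A) (a ^ e * (a ^ n - 1))).val e = 0 := by
    have hafact : algebraMap A (AdicCompletion 𝔭 A) (a ^ e * (a ^ n - 1))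
        = (algebraMap A (AdicCompletion 𝔭 A) a) ^ e
          * ((algebraMap A (AdicCompletion 𝔭 A) a) ^ n - 1) := by
      rw [map_mul, map_pow, map_sub, map_pow, map_one]
    rw [hafact, AdicCompletion.val_sub_apply, AdicCompletion.val_mul, AdicCompletion.val_mul,
      AdicCompletion.val_sub_apply, AdicCompletion.val_sub_apply, AdicCompletion.val_one,
      val_pow', val_pow', val_pow', val_pow',
      algebraMap_val', ← ha, sub_self]
  have h3 := mem_map_of_val_eq_zero' 𝔭 e _ h2
  have h4 : algebraMap A (AdicCompletion 𝔭 A) (a ^ e * (a ^ n - 1))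
      ∈ Ideal.map (algebraMap A (AdicCompletion 𝔭 A)) (𝔭 ^ e) := Ideal.mem_map_of_mem _ h1
  have h5 := add_mem h3 h4
  simpa using h5

end CongruingAux

/-- Hasse principle for `n`-congruing ideals: for a Minkowski Dedekind domain `A` and a
positive integer `n`, an ideal `I` of `A` is `n`-congruing if and only if, for every
maximal ideal `𝔭`, the extension of `I` to the `𝔭`-adic completion `Â_𝔭` is an
`n`-congruing ideal of `Â_𝔭`. -/
theorem stmt_11 {A : Type} [CommRing A] [IsDomain A] [IsDedekindDomain A]
    (hfin : ∀ 𝔭 : MaximalSpectrum A, Finite (A ⧸ 𝔭.asIdeal))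
    (hmink : ∀ N : ℕ, {𝔭 : MaximalSpectrum A | Nat.card (A ⧸ 𝔭.asIdeal) < N}.Finite)
    (n : ℕ) (hn : 0 < n) (I : Ideal A) :
    (∀ a : A, ∃ N : ℕ, a ^ N * (a ^ n - 1) ∈ I) ↔
      ∀ 𝔭 : MaximalSpectrum A, ∀ b : AdicCompletion 𝔭.asIdeal A, ∃ N : ℕ,
        b ^ N * (b ^ n - 1) ∈ Ideal.map (algebraMap A (AdicCompletion 𝔭.asIdeal A)) I := by
  classical
  constructor
  · intro h 𝔭 b
    by_cases hI0 : I = ⊥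
    · -- then `A` is a field and `𝔭 = ⊥ = I`
      have hfield : IsField A := by
        refine ⟨exists_pair_ne A, mul_comm, ?_⟩
        intro a ha
        obtain ⟨N, hN⟩ := h a
        rw [hI0, Ideal.mem_bot] at hN
        rcases mul_eq_zero.mp hN with h1 | h2
        · rcases Nat.eq_zero_or_pos N with hNz | hNpos
          · rw [hNz, pow_zero] at h1; exact absurd h1 one_ne_zero
          · exact absurd (pow_eq_zero_iff hNpos.ne' |>.mp h1) ha
        · refine ⟨a ^ (n - 1), ?_⟩
          have han : a ^ n = 1 := sub_eq_zero.mp h2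
          calc a * a ^ (n - 1) = a ^ n := by
                rw [← pow_succ']; congr 1; omega
            _ = 1 := han
      letI : Field A := hfield.toField
      have h𝔭bot : 𝔭.asIdeal = ⊥ :=
        (Ideal.eq_bot_or_top 𝔭.asIdeal).resolve_right 𝔭.isMaximal.ne_top
      refine ⟨1, forward_mem' 𝔭.asIdeal 𝔭.isMaximal (I := I) (e := 1) (J := ⊤) ?_ ?_ h b⟩
      · rw [pow_one, Ideal.mul_top, hI0, h𝔭bot]
      · rw [Ideal.map_top]
    · obtain ⟨Q, hQtop, hIeq⟩ := Ideal.eq_prime_pow_mul_coprime hI0 𝔭.asIdeal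
      exact ⟨_, forward_mem' 𝔭.asIdeal 𝔭.isMaximal hIeq
        (map_eq_top_of_sup' 𝔭.asIdeal hQtop) h b⟩
  · intro H a
    by_cases hI0 : I = ⊥
    · obtain ⟨M, hM⟩ := Ideal.exists_maximal A
      obtain ⟨N, hN⟩ := H ⟨M, hM⟩ (algebraMap A _ a)
      refine ⟨N, ?_⟩
      rw [hI0] at hN ⊢
      rw [Ideal.map_bot, Ideal.mem_bot] at hN
      have hz : algebraMap A (AdicCompletion M A) (a ^ N * (a ^ n - 1)) = 0 := by
        rw [map_mul, map_pow, map_sub, map_pow, map_one]; exact hN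
      rw [Ideal.mem_bot]
      have hall : ∀ k : ℕ, a ^ N * (a ^ n - 1) ∈ M ^ k := by
        intro k
        have hk := congrArg (fun z : AdicCompletion M A => z.val k) hz
        simp only [AdicCompletion.val_zero_apply] at hk
        rw [algebraMap_val', Submodule.Quotient.mk_eq_zero, smul_top_eq'] at hk
        exact hk
      have hKrull : (⨅ k : ℕ, M ^ k) = ⊥ := Ideal.iInf_pow_eq_bot_of_isDomain _ hM.ne_top
      rw [← Ideal.mem_bot, ← hKrull]
      exact (Submodule.mem_iInf _).mpr hall
    · have key : ∀ 𝔭 : MaximalSpectrum A, ∃ N : ℕ, a ^ N * (a ^ n - 1)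
          ∈ 𝔭.asIdeal ^ (Multiset.count 𝔭.asIdeal (UniqueFactorizationMonoid.normalizedFactors I)) := by
        intro 𝔭
        obtain ⟨Q, hQtop, hIeq⟩ := Ideal.eq_prime_pow_mul_coprime hI0 𝔭.asIdeal
        obtain ⟨N, hN⟩ := H 𝔭 (algebraMap A _ a)
        refine ⟨N, ?_⟩
        have hmap : Ideal.map (algebraMap A (AdicCompletion 𝔭.asIdeal A)) I
            = Ideal.map (algebraMap A (AdicCompletion 𝔭.asIdeal A))
              (𝔭.asIdeal ^ (Multiset.count 𝔭.asIdeal (UniqueFactorizationMonoid.normalizedFactors I))) := by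
          conv_lhs => rw [hIeq]
          rw [Ideal.map_mul, map_eq_top_of_sup' 𝔭.asIdeal hQtop, Ideal.mul_top]
        rw [hmap] at hN
        apply mem_pow_of_algebraMap_mem_map'
        rw [map_mul, map_pow, map_sub, map_pow, map_one]
        exact hN
      choose Nf hNf using key
      set fac := UniqueFactorizationMonoid.normalizedFactors I with hfac
      set T := fac.toFinset with hT
      have hTmax : ∀ q ∈ T, q.IsMaximal := by
        intro q hq
        have hq' : q ∈ fac := Multiset.mem_toFinset.mp hq
        have hprime : Prime q := UniqueFactorizationMonoid.prime_of_normalized_factor q hq'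
        exact (Ideal.isPrime_of_prime hprime).isMaximal hprime.ne_zero
      set N₀ := T.attach.sup (fun q => Nf ⟨q.1, hTmax q.1 q.2⟩) with hN₀
      refine ⟨N₀, ?_⟩
      by_cases hy : a ^ N₀ * (a ^ n - 1) = 0
      · rw [hy]; exact I.zero_mem
      · rw [← Ideal.dvd_span_singleton]
        have hspan0 : Ideal.span {a ^ N₀ * (a ^ n - 1)} ≠ ⊥ := by
          rw [Ne, Ideal.span_singleton_eq_bot]; exact hy
        rw [UniqueFactorizationMonoid.dvd_iff_normalizedFactors_le_normalizedFactors hI0 hspan0,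
          Multiset.le_iff_count]
        intro q
        by_cases hq : q ∈ fac
        · have hqT : q ∈ T := Multiset.mem_toFinset.mpr hq
          set 𝔮 : MaximalSpectrum A := ⟨q, hTmax q hqT⟩ with h𝔮
          have hle : Nf 𝔮 ≤ N₀ := Finset.le_sup (f := fun p : {x // x ∈ T} => Nf ⟨p.1, hTmax p.1 p.2⟩) (Finset.mem_attach T ⟨q, hqT⟩)
          have hmem : a ^ N₀ * (a ^ n - 1) ∈ q ^ (Multiset.count q fac) := by
            have h1 := hNf 𝔮
            have hsplit : a ^ N₀ * (a ^ n - 1)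
                = a ^ (N₀ - Nf 𝔮) * (a ^ (Nf 𝔮) * (a ^ n - 1)) := by
              rw [← mul_assoc, ← pow_add]; congr 2; omega
            rw [hsplit]
            exact Ideal.mul_mem_left _ _ h1
          have hs : Ideal.span {a ^ N₀ * (a ^ n - 1)} ≤ q ^ (Multiset.count q fac) :=
            (Ideal.span_le).mpr (Set.singleton_subset_iff.mpr hmem)
          have hcount := count_le_of_ideal_ge hs hspan0 q
          have hirr : Irreducible q :=
            (UniqueFactorizationMonoid.prime_of_normalized_factor q hq).irreducible
          have hnfq : UniqueFactorizationMonoid.normalizedFactors (q ^ Multiset.count q fac)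
              = (Multiset.count q fac) • ({q} : Multiset (Ideal A)) := by
            rw [UniqueFactorizationMonoid.normalizedFactors_pow,
              UniqueFactorizationMonoid.normalizedFactors_irreducible hirr, normalize_eq]
          rw [hnfq, Multiset.count_nsmul, Multiset.count_singleton, if_pos rfl, mul_one] at hcount
          exact hcount
        · rw [Multiset.count_eq_zero_of_notMem hq]
          exact Nat.zero_le _
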